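/- arXiv:2408.10087 — 2 statements merged into one kernel-verified Lean document; each statement's English description precedes it below -/
import Mathlib

section
/- Let (X,e_X,μ_X) be an NP_i-digital H-space for i ∈ {1,2}, and let (Y,e_Y) be a pointed digital image such that X and Y are NP_i-homotopy equivalent by pointed continuous maps f : (X,e_X) → (Y,e_Y) and g : (Y,e_Y) → (X,e_X) (so f∘g ≃_i id_Y and g∘f ≃_i id_X and f(e_X)=e_Y, g(e_Y)=e_X). Define μ_Y : Y × Y → Y by μ_Y = f ∘ μ_X ∘ (g × g). Then (Y,e_Y,μ_Y) is an NP_i-digital H-space, and (X,e_X,μ_X) and (Y,e_Y,μ_Y) are H-equivalent. -/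
/-- A digital image: a finite set with a reflexive, symmetric adjacency relation
(a finite reflexive graph). -/
structure DigImage where
  carrier : Type
  [fintype : Fintype carrier]
  adj : carrier → carrier → Prop
  adj_refl : ∀ x, adj x x
  adj_symm : ∀ {x y}, adj x y → adj y x

attribute [instance] DigImage.fintype

/-- `f : (X,κ) → (Y,λ)` is digitally continuous if it preserves adjacency. -/
def DigContinuous (X Y : DigImage) (f : X.carrier → Y.carrier) : Prop :=
  ∀ ⦃a b : X.carrier⦄, X.adj a b → Y.adj (f a) (f b)

/-- The product of two digital images with the normal product adjacency `NP_i`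
(for `i ≤ 1` this is `NP_1`; otherwise `NP_2`): two pairs are adjacent iff
their coordinates are adjacent in at most `i` positions and equal elsewhere. -/
def DigImage.prod (i : ℕ) (X Y : DigImage) : DigImage where
  carrier := X.carrier × Y.carrier
  adj p q :=
    if i ≤ 1 then (p.1 = q.1 ∧ Y.adj p.2 q.2) ∨ (p.2 = q.2 ∧ X.adj p.1 q.1)
    else X.adj p.1 q.1 ∧ Y.adj p.2 q.2
  adj_refl p := by
    split_ifs
    · exact Or.inl ⟨rfl, Y.adj_refl p.2⟩
    · exact ⟨X.adj_refl p.1, Y.adj_refl p.2⟩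
  adj_symm {p q} h := by
    split_ifs at h ⊢ with hi
    · rcases h with ⟨h1, h2⟩ | ⟨h1, h2⟩
      · exact Or.inl ⟨h1.symm, Y.adj_symm h2⟩
      · exact Or.inr ⟨h1.symm, X.adj_symm h2⟩
    · exact ⟨X.adj_symm h.1, Y.adj_symm h.2⟩

/-- The triple product of digital images with the normal product adjacency `NP_i`:
coordinates adjacent in at most `i` positions and equal in all other positions. -/
def DigImage.prod3 (i : ℕ) (X Y Z : DigImage) : DigImage where
  carrier := X.carrier × Y.carrier × Z.carrier
  adj p q :=
    if i ≤ 1 then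
      (p.1 = q.1 ∧ p.2.1 = q.2.1 ∧ Z.adj p.2.2 q.2.2) ∨
      (p.1 = q.1 ∧ p.2.2 = q.2.2 ∧ Y.adj p.2.1 q.2.1) ∨
      (p.2.1 = q.2.1 ∧ p.2.2 = q.2.2 ∧ X.adj p.1 q.1)
    else
      (p.1 = q.1 ∧ Y.adj p.2.1 q.2.1 ∧ Z.adj p.2.2 q.2.2) ∨
      (p.2.1 = q.2.1 ∧ X.adj p.1 q.1 ∧ Z.adj p.2.2 q.2.2) ∨
      (p.2.2 = q.2.2 ∧ X.adj p.1 q.1 ∧ Y.adj p.2.1 q.2.1)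
  adj_refl p := by
    split_ifs
    · exact Or.inl ⟨rfl, rfl, Z.adj_refl p.2.2⟩
    · exact Or.inl ⟨rfl, Y.adj_refl p.2.1, Z.adj_refl p.2.2⟩
  adj_symm {p q} h := by
    split_ifs at h ⊢ with hi
    · rcases h with ⟨h1, h2, h3⟩ | ⟨h1, h2, h3⟩ | ⟨h1, h2, h3⟩
      · exact Or.inl ⟨h1.symm, h2.symm, Z.adj_symm h3⟩
      · exact Or.inr (Or.inl ⟨h1.symm, h2.symm, Y.adj_symm h3⟩)
      · exact Or.inr (Or.inr ⟨h1.symm, h2.symm, X.adj_symm h3⟩)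
    · rcases h with ⟨h1, h2, h3⟩ | ⟨h1, h2, h3⟩ | ⟨h1, h2, h3⟩
      · exact Or.inl ⟨h1.symm, Y.adj_symm h2, Z.adj_symm h3⟩
      · exact Or.inr (Or.inl ⟨h1.symm, X.adj_symm h2, Z.adj_symm h3⟩)
      · exact Or.inr (Or.inr ⟨h1.symm, X.adj_symm h2, Y.adj_symm h3⟩)

/-- The digital interval `[0,m]_ℤ` with the standard adjacency `|a−b| ≤ 1`. -/
def digInterval (m : ℕ) : DigImage where
  carrier := Fin (m + 1)
  adj a b := |(a : ℤ) - (b : ℤ)| ≤ 1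
  adj_refl a := by simp
  adj_symm {a b} h := by
    have h' : |(a : ℤ) - (b : ℤ)| ≤ 1 := h
    rw [abs_sub_comm] at h'
    exact h'

/-- `f` and `g` are `NP_i`-digitally homotopic: there is an
`NP_i`-continuous `H : X × [0,m]_ℤ → Y` with `H(·,0) = f` and `H(·,m) = g`. -/
def DigHomotopic (i : ℕ) (X Y : DigImage) (f g : X.carrier → Y.carrier) : Prop :=
  ∃ (m : ℕ) (H : X.carrier × Fin (m + 1) → Y.carrier),
    DigContinuous (DigImage.prod i X (digInterval m)) Y H ∧
    (∀ x, H (x, 0) = f x) ∧ (∀ x, H (x, Fin.last m) = g x)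

/-- An `NP_i`-digital H-space `(X,e,μ)`. -/
structure IsHSpace (i : ℕ) (X : DigImage) (e : X.carrier)
    (μ : X.carrier × X.carrier → X.carrier) : Prop where
  continuous : DigContinuous (DigImage.prod i X X) X μ
  right_unit : DigHomotopic i X X (fun x => μ (x, e)) id
  left_unit : DigHomotopic i X X (fun x => μ (e, x)) id

/-- H-equivalence of `NP_i`-digital H-spaces. -/
def HSpaceEquiv (i : ℕ) (X : DigImage) (eX : X.carrier)
    (μX : X.carrier × X.carrier → X.carrier)
    (Y : DigImage) (eY : Y.carrier)
    (μY : Y.carrier × Y.carrier → Y.carrier) : Prop :=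
  ∃ (f : X.carrier → Y.carrier) (g : Y.carrier → X.carrier),
    DigContinuous X Y f ∧ DigContinuous Y X g ∧ f eX = eY ∧ g eY = eX ∧
    DigHomotopic i Y Y (f ∘ g) id ∧ DigHomotopic i X X (g ∘ f) id ∧
    DigHomotopic i (DigImage.prod i X X) Y (fun p => f (μX p)) (fun p => μY (f p.1, f p.2)) ∧
    DigHomotopic i (DigImage.prod i Y Y) X (fun p => g (μY p)) (fun p => μX (g p.1, g p.2))

/-- `NP_i`-homotopy equivalence of digital images. -/
def DigHtpyEquiv (i : ℕ) (X Y : DigImage) : Prop :=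
  ∃ (f : X.carrier → Y.carrier) (g : Y.carrier → X.carrier),
    DigContinuous X Y f ∧ DigContinuous Y X g ∧
    DigHomotopic i X X (g ∘ f) id ∧ DigHomotopic i Y Y (f ∘ g) id

/-- A digital image is `NP_i`-irreducible if it is not `NP_i`-homotopy
equivalent to any digital image with fewer points. -/
def DigIrreducible (i : ℕ) (X : DigImage) : Prop :=
  ¬ ∃ Y : DigImage, Fintype.card Y.carrier < Fintype.card X.carrier ∧ DigHtpyEquiv i X Y

/-- A digital image is connected if any two points are joined by a path
of consecutively adjacent points. -/
def DigConnected (X : DigImage) : Prop :=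
  ∀ a b : X.carrier, Relation.ReflTransGen X.adj a b

/-- A digital image is `NP_i`-contractible if the identity is `NP_i`-homotopic
to a constant map. -/
def DigContractible (i : ℕ) (X : DigImage) : Prop :=
  ∃ c : X.carrier, DigHomotopic i X X id (fun _ => c)

/-- An isomorphism of digital images: a continuous bijection with continuous inverse. -/
def IsDigIso (X Y : DigImage) (f : X.carrier → Y.carrier) : Prop :=
  DigContinuous X Y f ∧ ∃ g : Y.carrier → X.carrier,
    DigContinuous Y X g ∧ Function.LeftInverse g f ∧ Function.RightInverse g f

/-- The sub-digital-image on the points satisfying `P`, with the induced adjacency. -/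
noncomputable def subImage (X : DigImage) (P : X.carrier → Prop) : DigImage where
  carrier := {x : X.carrier // P x}
  fintype := Fintype.ofFinite _
  adj a b := X.adj a.1 b.1
  adj_refl a := X.adj_refl a.1
  adj_symm h := X.adj_symm h

/-- The connected component of `e`, as a digital image. -/
noncomputable def componentImage (X : DigImage) (e : X.carrier) : DigImage :=
  subImage X (fun x => Relation.ReflTransGen X.adj e x)

/-- Homotopy-associativity of an `NP_i`-digital multiplication:
`μ∘(id × μ) ≃ᵢ μ∘(μ × id)` as maps `X × X × X → X` with `NP_i` adjacency. -/
def HomotopyAssociative (i : ℕ) (X : DigImage)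
    (μ : X.carrier × X.carrier → X.carrier) : Prop :=
  DigHomotopic i (DigImage.prod3 i X X X) X
    (fun p => μ (p.1, μ (p.2.1, p.2.2)))
    (fun p => μ (μ (p.1, p.2.1), p.2.2))

/-- `α` is a left homotopy-inverse for the H-space `(X,e,μ)`. -/
def LeftHtpyInverse (i : ℕ) (X : DigImage) (e : X.carrier)
    (μ : X.carrier × X.carrier → X.carrier) (α : X.carrier → X.carrier) : Prop :=
  DigContinuous X X α ∧ DigContinuous X X (fun x => μ (α x, x)) ∧
  DigHomotopic i X X (fun x => μ (α x, x)) (fun _ => e)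

/-- `β` is a right homotopy-inverse for the H-space `(X,e,μ)`. -/
def RightHtpyInverse (i : ℕ) (X : DigImage) (e : X.carrier)
    (μ : X.carrier × X.carrier → X.carrier) (β : X.carrier → X.carrier) : Prop :=
  DigContinuous X X β ∧ DigContinuous X X (fun x => μ (x, β x)) ∧
  DigHomotopic i X X (fun x => μ (x, β x)) (fun _ => e)


section AuxHomotopy

variable {i : ℕ}

lemma digCont_id' (X : DigImage) : DigContinuous X X id := fun _ _ h => h

lemma digCont_comp' {X Y Z : DigImage} {f : X.carrier → Y.carrier} {g : Y.carrier → Z.carrier}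
    (hg : DigContinuous Y Z g) (hf : DigContinuous X Y f) :
    DigContinuous X Z (fun x => g (f x)) := fun _ _ h => hg (hf h)

lemma prod_adj' {X Y : DigImage} {p q : X.carrier × Y.carrier} :
    (DigImage.prod i X Y).adj p q ↔
      (if i ≤ 1 then (p.1 = q.1 ∧ Y.adj p.2 q.2) ∨ (p.2 = q.2 ∧ X.adj p.1 q.1)
       else X.adj p.1 q.1 ∧ Y.adj p.2 q.2) := Iff.rfl

lemma interval_adj_of {m : ℕ} {a b : Fin (m + 1)}
    (h : |((a : ℕ) : ℤ) - ((b : ℕ) : ℤ)| ≤ 1) : (digInterval m).adj a b := by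
  show |(a : ℤ) - (b : ℤ)| ≤ 1
  exact_mod_cast h

lemma interval_adj_elim {m : ℕ} {a b : Fin (m + 1)}
    (h : (digInterval m).adj a b) : |((a : ℕ) : ℤ) - ((b : ℕ) : ℤ)| ≤ 1 := by
  have h' : |(a : ℤ) - (b : ℤ)| ≤ 1 := h
  exact_mod_cast h'

lemma digCont_prodMap' {A B X Y : DigImage} {φ : A.carrier → X.carrier}
    {ψ : B.carrier → Y.carrier} (hφ : DigContinuous A X φ) (hψ : DigContinuous B Y ψ) :
    DigContinuous (DigImage.prod i A B) (DigImage.prod i X Y) (fun p => (φ p.1, ψ p.2)) := by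
  intro p q h
  dsimp only
  erw [prod_adj'] at h ⊢
  dsimp only at h ⊢
  split_ifs at h ⊢ with hI
  · rcases h with ⟨h1, h2⟩ | ⟨h1, h2⟩
    · exact Or.inl ⟨by rw [h1], hψ h2⟩
    · exact Or.inr ⟨by rw [h1], hφ h2⟩
  · exact ⟨hφ h.1, hψ h.2⟩

lemma digHomotopic_refl' {X Y : DigImage} {f : X.carrier → Y.carrier}
    (hf : DigContinuous X Y f) : DigHomotopic i X Y f f := by
  refine ⟨0, fun p => f p.1, ?_, fun _ => rfl, fun _ => rfl⟩
  intro p q h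
  dsimp only
  erw [prod_adj'] at h
  split_ifs at h with hI
  · rcases h with ⟨h1, _⟩ | ⟨_, h2⟩
    · rw [h1]; exact Y.adj_refl _
    · exact hf h2
  · exact hf h.1

lemma digCont_rev' {m : ℕ} : DigContinuous (digInterval m) (digInterval m) Fin.rev := by
  intro a b h
  have h' := interval_adj_elim h
  apply interval_adj_of
  erw [Fin.val_rev, Fin.val_rev]
  have ha : Fin.val a < m + 1 := Fin.isLt a
  have hb : Fin.val b < m + 1 := Fin.isLt b
  rw [abs_le] at h' ⊢
  omega

lemma digHomotopic_symm' {X Y : DigImage} {f g : X.carrier → Y.carrier}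
    (h : DigHomotopic i X Y f g) : DigHomotopic i X Y g f := by
  obtain ⟨m, H, hH, h0, h1⟩ := h
  refine ⟨m, fun p => H (p.1, Fin.rev p.2), ?_, ?_, ?_⟩
  · exact fun p q hpq => hH (digCont_prodMap' (digCont_id' X) digCont_rev' hpq)
  · intro x
    show H (x, Fin.rev 0) = g x
    rw [Fin.rev_zero]
    exact h1 x
  · intro x
    show H (x, Fin.rev (Fin.last m)) = f x
    rw [Fin.rev_last]
    exact h0 x

lemma digHomotopic_compLeft' {X Y Z : DigImage} {f g : X.carrier → Y.carrier}
    {h : Y.carrier → Z.carrier} (hh : DigContinuous Y Z h)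
    (hfg : DigHomotopic i X Y f g) :
    DigHomotopic i X Z (fun x => h (f x)) (fun x => h (g x)) := by
  obtain ⟨m, H, hH, h0, h1⟩ := hfg
  exact ⟨m, fun p => h (H p), fun _ _ hpq => hh (hH hpq),
    fun x => congrArg h (h0 x), fun x => congrArg h (h1 x)⟩

lemma digHomotopic_compRight' {W X Y : DigImage} {f g : X.carrier → Y.carrier}
    {k : W.carrier → X.carrier} (hk : DigContinuous W X k)
    (hfg : DigHomotopic i X Y f g) :
    DigHomotopic i W Y (fun w => f (k w)) (fun w => g (k w)) := by
  obtain ⟨m, H, hH, h0, h1⟩ := hfg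
  exact ⟨m, fun p => H (k p.1, p.2),
    fun _ _ hpq => hH (digCont_prodMap' hk (digCont_id' _) hpq),
    fun x => h0 _, fun x => h1 _⟩

lemma digHomotopic_trans' {X Y : DigImage} {f g k : X.carrier → Y.carrier}
    (hfg : DigHomotopic i X Y f g) (hgk : DigHomotopic i X Y g k) :
    DigHomotopic i X Y f k := by
  obtain ⟨m1, H1, hH1, e10, e11⟩ := hfg
  obtain ⟨m2, H2, hH2, e20, e21⟩ := hgk
  have hmid : ∀ x, H1 (x, Fin.last m1) = H2 (x, 0) := fun x => by rw [e11, e20]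
  refine ⟨m1 + m2, fun p =>
    if h : (p.2 : ℕ) ≤ m1 then H1 (p.1, ⟨p.2, by omega⟩)
    else H2 (p.1, ⟨(p.2 : ℕ) - m1, by have := p.2.isLt; omega⟩), ?_, ?_, ?_⟩
  · have key : ∀ p q : X.carrier × Fin (m1 + m2 + 1),
        (DigImage.prod i X (digInterval (m1 + m2))).adj p q → (p.2 : ℕ) ≤ (q.2 : ℕ) →
        Y.adj ((if h : (p.2 : ℕ) ≤ m1 then H1 (p.1, ⟨p.2, by omega⟩)
          else H2 (p.1, ⟨(p.2 : ℕ) - m1, by have := p.2.isLt; omega⟩)))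
          ((if h : (q.2 : ℕ) ≤ m1 then H1 (q.1, ⟨q.2, by omega⟩)
          else H2 (q.1, ⟨(q.2 : ℕ) - m1, by have := q.2.isLt; omega⟩))) := by
      intro p q hpq hle
      have hXadj : X.adj p.1 q.1 := by
        erw [prod_adj'] at hpq
        split_ifs at hpq with hI
        · rcases hpq with ⟨h1, _⟩ | ⟨_, h2⟩
          · rw [h1]; exact X.adj_refl _
          · exact h2
        · exact hpq.1
      have hIadj : |((p.2 : ℕ) : ℤ) - ((q.2 : ℕ) : ℤ)| ≤ 1 := by
        erw [prod_adj'] at hpq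
        split_ifs at hpq with hI
        · rcases hpq with ⟨_, h2⟩ | ⟨h1, _⟩
          · exact interval_adj_elim h2
          · rw [h1]; simp
        · exact interval_adj_elim hpq.2
      have hEq : ¬ i ≤ 1 ∨ p.1 = q.1 ∨ p.2 = q.2 := by
        erw [prod_adj'] at hpq
        split_ifs at hpq with hI
        · rcases hpq with ⟨h1, _⟩ | ⟨h1, _⟩
          · exact Or.inr (Or.inl h1)
          · exact Or.inr (Or.inr h1)
        · exact Or.inl hI
      split_ifs with hp hq hq
      · apply hH1
        erw [prod_adj']
        split_ifs with hI
        · rcases hEq.resolve_left (not_not_intro hI) with h | h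
          · exact Or.inl ⟨h, interval_adj_of hIadj⟩
          · exact Or.inr ⟨Fin.ext (show Fin.val p.2 = Fin.val q.2 from congrArg Fin.val h), hXadj⟩
        · exact ⟨hXadj, interval_adj_of hIadj⟩
      · have ht1 : (p.2 : ℕ) = m1 := by rw [abs_le] at hIadj; omega
        have ht2 : (q.2 : ℕ) = m1 + 1 := by rw [abs_le] at hIadj; omega
        have hp2 : (⟨(p.2 : ℕ), by omega⟩ : Fin (m1 + 1)) = Fin.last m1 :=
          Fin.ext (by simp [Fin.val_last, ht1])
        rw [hp2, hmid]
        apply hH2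
        erw [prod_adj']
        have hval : ((0 : Fin (m2 + 1)) : ℕ) = 0 := by simp
        have hnum : |(((0 : Fin (m2 + 1)) : ℕ) : ℤ) -
            ((((q.2 : ℕ) - m1 : ℕ)) : ℤ)| ≤ 1 := by
          rw [hval, abs_le]; omega
        split_ifs with hI
        · rcases hEq.resolve_left (not_not_intro hI) with h | h
          · exact Or.inl ⟨h, interval_adj_of hnum⟩
          · exact absurd (congrArg Fin.val h) (by omega)
        · exact ⟨hXadj, interval_adj_of hnum⟩
      · exact absurd hle (by omega)
      · apply hH2
        erw [prod_adj']
        have hnum : |((((p.2 : ℕ) - m1 : ℕ)) : ℤ) - ((((q.2 : ℕ) - m1 : ℕ)) : ℤ)| ≤ 1 := by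
          rw [abs_le] at hIadj ⊢; omega
        split_ifs with hI
        · rcases hEq.resolve_left (not_not_intro hI) with h | h
          · exact Or.inl ⟨h, interval_adj_of hnum⟩
          · exact Or.inr ⟨Fin.ext (show Fin.val p.2 - m1 = Fin.val q.2 - m1 by rw [h]), hXadj⟩
        · exact ⟨hXadj, interval_adj_of hnum⟩
    intro p q hpq
    rcases le_total (Fin.val p.2) (Fin.val q.2) with h | h
    · exact key p q hpq h
    · exact Y.adj_symm (key q p ((DigImage.prod i X (digInterval (m1 + m2))).adj_symm hpq) h)
  · intro x
    dsimp only
    rw [dif_pos (show ((0 : Fin (m1 + m2 + 1)) : ℕ) ≤ m1 by simp)]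
    have gen : ∀ t : Fin (m1 + 1), t = 0 → H1 (x, t) = f x := fun t ht => ht ▸ e10 x
    exact gen _ (Fin.ext (by simp))
  · intro x
    dsimp only
    by_cases hm : ((Fin.last (m1 + m2) : Fin (m1 + m2 + 1)) : ℕ) ≤ m1
    · rw [dif_pos hm]
      have hm2 : m2 = 0 := by rw [Fin.val_last] at hm; omega
      have gen : ∀ t : Fin (m1 + 1), t = Fin.last m1 → H1 (x, t) = H2 (x, 0) :=
        fun t ht => ht ▸ hmid x
      rw [gen _ (Fin.ext (by simp [Fin.val_last]; try omega))]
      have h2 : (0 : Fin (m2 + 1)) = Fin.last m2 := Fin.ext (by simp [Fin.val_last, hm2])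
      rw [h2]
      exact e21 x
    · rw [dif_neg hm]
      have gen : ∀ t : Fin (m2 + 1), t = Fin.last m2 → H2 (x, t) = k x :=
        fun t ht => ht ▸ e21 x
      exact gen _ (Fin.ext (by simp [Fin.val_last]; try omega))

lemma htpy_prod_left' {A B : DigImage} {u v : A.carrier → A.carrier}
    (h : DigHomotopic i A A u v) :
    DigHomotopic i (DigImage.prod i A B) (DigImage.prod i A B)
      (fun p => (u p.1, p.2)) (fun p => (v p.1, p.2)) := by
  obtain ⟨m, H, hH, h0, h1⟩ := h
  refine ⟨m, fun P => (H (P.1.1, P.2), P.1.2), ?_,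
    fun p => by dsimp only; rw [h0], fun p => by dsimp only; rw [h1]⟩
  intro P Q hPQ
  dsimp only
  erw [prod_adj'] at hPQ ⊢
  dsimp only at hPQ ⊢
  split_ifs at hPQ ⊢ with hI
  · rcases hPQ with ⟨hab, ht⟩ | ⟨ht, hab⟩
    · refine Or.inr ⟨by rw [hab], ?_⟩
      apply hH
      erw [prod_adj', if_pos hI]
      exact Or.inl ⟨by rw [hab], ht⟩
    · erw [prod_adj', if_pos hI] at hab
      rcases hab with ⟨ha, hb⟩ | ⟨hb, ha⟩
      · exact Or.inl ⟨by rw [ha, ht], hb⟩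
      · refine Or.inr ⟨hb, ?_⟩
        apply hH
        erw [prod_adj', if_pos hI]
        exact Or.inr ⟨ht, ha⟩
  · obtain ⟨hab, ht⟩ := hPQ
    erw [prod_adj', if_neg hI] at hab
    refine ⟨?_, hab.2⟩
    apply hH
    erw [prod_adj', if_neg hI]
    exact ⟨hab.1, ht⟩

lemma htpy_prod_right' {A B : DigImage} {u v : B.carrier → B.carrier}
    (h : DigHomotopic i B B u v) :
    DigHomotopic i (DigImage.prod i A B) (DigImage.prod i A B)
      (fun p => (p.1, u p.2)) (fun p => (p.1, v p.2)) := by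
  obtain ⟨m, H, hH, h0, h1⟩ := h
  refine ⟨m, fun P => (P.1.1, H (P.1.2, P.2)), ?_,
    fun p => by dsimp only; rw [h0], fun p => by dsimp only; rw [h1]⟩
  intro P Q hPQ
  dsimp only
  erw [prod_adj'] at hPQ ⊢
  dsimp only at hPQ ⊢
  split_ifs at hPQ ⊢ with hI
  · rcases hPQ with ⟨hab, ht⟩ | ⟨ht, hab⟩
    · refine Or.inl ⟨by rw [hab], ?_⟩
      apply hH
      erw [prod_adj', if_pos hI]
      exact Or.inl ⟨by rw [hab], ht⟩
    · erw [prod_adj', if_pos hI] at hab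
      rcases hab with ⟨ha, hb⟩ | ⟨hb, ha⟩
      · refine Or.inl ⟨ha, ?_⟩
        apply hH
        erw [prod_adj', if_pos hI]
        exact Or.inr ⟨ht, hb⟩
      · exact Or.inr ⟨by rw [hb, ht], ha⟩
  · obtain ⟨hab, ht⟩ := hPQ
    erw [prod_adj', if_neg hI] at hab
    refine ⟨hab.1, ?_⟩
    apply hH
    erw [prod_adj', if_neg hI]
    exact ⟨hab.2, ht⟩

end AuxHomotopy


/-- An H-space structure transported along a pointed homotopy
equivalence: `μ_Y = f ∘ μ_X ∘ (g × g)` makes `(Y,e_Y,μ_Y)` an `NP_i`-digital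
H-space which is H-equivalent to `(X,e_X,μ_X)`. -/
theorem induced_hspace (i : ℕ) (hi : i = 1 ∨ i = 2)
    (X : DigImage) (eX : X.carrier) (μX : X.carrier × X.carrier → X.carrier)
    (hX : IsHSpace i X eX μX)
    (Y : DigImage) (eY : Y.carrier)
    (f : X.carrier → Y.carrier) (g : Y.carrier → X.carrier)
    (hf : DigContinuous X Y f) (hg : DigContinuous Y X g)
    (hfe : f eX = eY) (hge : g eY = eX)
    (hfg : DigHomotopic i Y Y (f ∘ g) id)
    (hgf : DigHomotopic i X X (g ∘ f) id) :
    IsHSpace i Y eY (fun p => f (μX (g p.1, g p.2))) ∧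
    HSpaceEquiv i X eX μX Y eY (fun p => f (μX (g p.1, g p.2))) := by
  have hgfc : DigContinuous X X (fun x => g (f x)) := digCont_comp' hg hf
  have hμY : DigContinuous (DigImage.prod i Y Y) Y (fun p => f (μX (g p.1, g p.2))) :=
    digCont_comp' hf (digCont_comp' hX.continuous (digCont_prodMap' hg hg))
  have hF : DigContinuous (DigImage.prod i X X) Y (fun p => f (μX p)) :=
    digCont_comp' hf hX.continuous
  refine ⟨⟨hμY, ?_, ?_⟩, ?_⟩
  · show DigHomotopic i Y Y (fun y => f (μX (g y, g eY))) id
    have e1 : (fun y : Y.carrier => f (μX (g y, g eY))) = fun y => f (μX (g y, eX)) := by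
      rw [hge]
    rw [e1]
    exact digHomotopic_trans'
      (digHomotopic_compLeft' hf (digHomotopic_compRight' hg hX.right_unit)) hfg
  · show DigHomotopic i Y Y (fun y => f (μX (g eY, g y))) id
    have e1 : (fun y : Y.carrier => f (μX (g eY, g y))) = fun y => f (μX (eX, g y)) := by
      rw [hge]
    rw [e1]
    exact digHomotopic_trans'
      (digHomotopic_compLeft' hf (digHomotopic_compRight' hg hX.left_unit)) hfg
  · refine ⟨f, g, hf, hg, hfe, hge, hfg, hgf, ?_, ?_⟩
    · show DigHomotopic i (DigImage.prod i X X) Y (fun p => f (μX p))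
        (fun p => f (μX (g (f p.1), g (f p.2))))
      have hidφ : DigHomotopic i X X id (fun x => g (f x)) := digHomotopic_symm' hgf
      have step1 : DigHomotopic i (DigImage.prod i X X) Y (fun p => f (μX p))
          (fun p => f (μX (g (f p.1), p.2))) :=
        digHomotopic_compLeft' (h := fun p => f (μX p)) hF (htpy_prod_left' (B := X) hidφ)
      have hGc : DigContinuous (DigImage.prod i X X) Y
          (fun p => f (μX (g (f p.1), p.2))) := fun a b h =>
        hF (digCont_prodMap' hgfc (digCont_id' X) h)
      have step2 : DigHomotopic i (DigImage.prod i X X) Y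
          (fun p => f (μX (g (f p.1), p.2)))
          (fun p => f (μX (g (f p.1), g (f p.2)))) :=
        digHomotopic_compLeft' (h := fun p : X.carrier × X.carrier => f (μX (g (f p.1), p.2))) hGc
          (htpy_prod_right' (A := X) hidφ)
      exact digHomotopic_trans' step1 step2
    · show DigHomotopic i (DigImage.prod i Y Y) X
        (fun p => g (f (μX (g p.1, g p.2)))) (fun p => μX (g p.1, g p.2))
      have hkc : DigContinuous (DigImage.prod i Y Y) X (fun p => μX (g p.1, g p.2)) :=
        digCont_comp' hX.continuous (digCont_prodMap' hg hg)
      exact digHomotopic_compRight' hkc hgf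
end

section
/- Let (X,e_X,μ_X) and (Y,e_Y,μ_Y) be H-equivalent NP_2-digital H-spaces. If (X,e_X,μ_X) has a left homotopy-inverse, then (Y,e_Y,μ_Y) has a left homotopy-inverse; if (X,e_X,μ_X) has a right homotopy-inverse, then (Y,e_Y,μ_Y) has a right homotopy-inverse; and if the left and right homotopy-inverses of X are NP_2-homotopic, then the left and right homotopy-inverses of Y so obtained are NP_2-homotopic. -/
lemma prod2_adj (X Y : DigImage) (p q : X.carrier × Y.carrier) :
    (DigImage.prod 2 X Y).adj p q ↔ X.adj p.1 q.1 ∧ Y.adj p.2 q.2 := by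
  simp [DigImage.prod]

lemma interval_adj_iff (m : ℕ) (a b : Fin (m + 1)) :
    (digInterval m).adj a b ↔ a.val ≤ b.val + 1 ∧ b.val ≤ a.val + 1 := by
  show |(a.val : ℤ) - (b.val : ℤ)| ≤ 1 ↔ _
  rw [abs_le]; omega

lemma dh_refl {X Y : DigImage} {f : X.carrier → Y.carrier}
    (hf : DigContinuous X Y f) : DigHomotopic 2 X Y f f := by
  refine ⟨0, fun p => f p.1, ?_, fun x => rfl, fun x => rfl⟩
  intro a b h
  exact hf ((prod2_adj X (digInterval 0) a b).mp h).1

lemma dh_symm {X Y : DigImage} {f g : X.carrier → Y.carrier}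
    (h : DigHomotopic 2 X Y f g) : DigHomotopic 2 X Y g f := by
  obtain ⟨m, H, hc, h0, h1⟩ := h
  refine ⟨m, fun p => H (p.1, p.2.rev), ?_, ?_, ?_⟩
  · intro a b hab
    apply hc
    replace hab := (prod2_adj X (digInterval m) a b).mp hab
    refine (prod2_adj X (digInterval m) _ _).mpr ?_
    refine ⟨hab.1, ?_⟩
    have h2 := (interval_adj_iff m _ _).mp hab.2
    refine (interval_adj_iff m _ _).mpr ?_
    have r1 : (Fin.rev a.2).val = m - a.2.val := (Fin.val_rev (a.2 : Fin (m + 1))).trans (by omega)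
    have r2 : (Fin.rev b.2).val = m - b.2.val := (Fin.val_rev (b.2 : Fin (m + 1))).trans (by omega)
    have := a.2.isLt
    have := b.2.isLt
    dsimp only at h2 ⊢
    omega
  · intro x
    show H (x, Fin.rev 0) = g x
    rw [show Fin.rev (0 : Fin (m+1)) = Fin.last m by simp]; exact h1 x
  · intro x
    show H (x, Fin.rev (Fin.last m)) = f x
    rw [show Fin.rev (Fin.last m) = (0 : Fin (m+1)) by simp]; exact h0 x

lemma dh_trans {X Y : DigImage} {f g h : X.carrier → Y.carrier}
    (h1 : DigHomotopic 2 X Y f g) (h2 : DigHomotopic 2 X Y g h) :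
    DigHomotopic 2 X Y f h := by
  obtain ⟨m1, H1, c1, a1, b1⟩ := h1
  obtain ⟨m2, H2, c2, a2, b2⟩ := h2
  refine ⟨m1 + m2, fun p =>
    if hp : p.2.val ≤ m1 then H1 (p.1, ⟨p.2.val, by omega⟩)
    else H2 (p.1, ⟨p.2.val - m1, by omega⟩), ?_, ?_, ?_⟩
  · rintro ⟨x, t⟩ ⟨x', t'⟩ hab
    rw [prod2_adj] at hab
    obtain ⟨hx, ht⟩ := hab
    replace ht := (interval_adj_iff _ _ _).mp ht
    dsimp only at ht
    have ht1 := t.isLt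
    have ht2 := t'.isLt
    have key : ∀ (s s' : Fin (m1 + 1)), s.val ≤ s'.val + 1 → s'.val ≤ s.val + 1 →
        Y.adj (H1 (x, s)) (H1 (x', s')) := fun s s' u v =>
      c1 (a := (x, s)) (b := (x', s'))
        ((prod2_adj X (digInterval m1) _ _).mpr ⟨hx, (interval_adj_iff m1 s s').mpr ⟨u, v⟩⟩)
    have key2 : ∀ (s s' : Fin (m2 + 1)), s.val ≤ s'.val + 1 → s'.val ≤ s.val + 1 →
        Y.adj (H2 (x, s)) (H2 (x', s')) := fun s s' u v =>
      c2 (a := (x, s)) (b := (x', s'))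
        ((prod2_adj X (digInterval m2) _ _).mpr ⟨hx, (interval_adj_iff m2 s s').mpr ⟨u, v⟩⟩)
    by_cases p1 : t.val ≤ m1 <;> by_cases p2 : t'.val ≤ m1 <;>
      simp only [p1, p2, dite_true, dite_false, dif_pos, dif_neg, not_false_iff]
    · exact key _ _ (by simpa using ht.1) (by simpa using ht.2)
    · -- t ≤ m1 < t', so t = m1, t' = m1+1
      have e1 : t.val = m1 := by omega
      have e2 : t'.val = m1 + 1 := by omega
      have eq1 : (⟨t.val, by omega⟩ : Fin (m1 + 1)) = Fin.last m1 := by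
        apply Fin.ext; simp [e1]
      rw [eq1, b1, ← a2 x]
      exact key2 _ _ (by simp) (by simp; omega)
    · have e1 : t'.val = m1 := by omega
      have e2 : t.val = m1 + 1 := by omega
      have eq1 : (⟨t'.val, by omega⟩ : Fin (m1 + 1)) = Fin.last m1 := by
        apply Fin.ext; simp [e1]
      rw [eq1, b1, ← a2 x']
      exact key2 _ _ (by simp; omega) (by simp)
    · exact key2 _ _ (by simp; omega) (by simp; omega)
  · intro x
    simp only [Fin.val_zero, Nat.zero_le, dite_true, dif_pos]
    exact (dif_pos (Nat.zero_le m1)).trans (a1 x)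
  · intro x
    show (if hp : (Fin.last (m1 + m2)).val ≤ m1
        then H1 (x, ⟨(Fin.last (m1 + m2)).val, by omega⟩)
        else H2 (x, ⟨(Fin.last (m1 + m2)).val - m1, by omega⟩)) = h x
    by_cases hp : (Fin.last (m1 + m2)).val ≤ m1
    · rw [dif_pos hp]
      have hm2 : m2 = 0 := by simp [Fin.last] at hp; omega
      have eq1 : (⟨(Fin.last (m1 + m2)).val, by omega⟩ : Fin (m1 + 1)) = Fin.last m1 := by
        apply Fin.ext; simp [Fin.last, hm2]
      rw [eq1, b1, ← a2 x, ← b2 x]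
      have e0 : (0 : Fin (m2 + 1)) = Fin.last m2 := by
        apply Fin.ext; simp [Fin.last, hm2]
      rw [e0]
    · rw [dif_neg hp]
      have eq1 : (⟨(Fin.last (m1 + m2)).val - m1, by omega⟩ : Fin (m2 + 1)) = Fin.last m2 := by
        apply Fin.ext; simp [Fin.last]
      rw [eq1, b2]

/-- postcompose a homotopy with a continuous map -/
lemma dh_comp_left {X Y Z : DigImage} {f g : X.carrier → Y.carrier}
    (k : Y.carrier → Z.carrier) (hk : DigContinuous Y Z k)
    (h : DigHomotopic 2 X Y f g) : DigHomotopic 2 X Z (fun x => k (f x)) (fun x => k (g x)) := by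
  obtain ⟨m, H, hc, h0, h1⟩ := h
  exact ⟨m, fun p => k (H p), fun a b hab => hk (hc hab),
    fun x => by simp [h0 x], fun x => by simp [h1 x]⟩

/-- precompose a homotopy with a continuous map -/
lemma dh_comp_right {W X Y : DigImage} {f g : X.carrier → Y.carrier}
    (k : W.carrier → X.carrier) (hk : DigContinuous W X k)
    (h : DigHomotopic 2 X Y f g) : DigHomotopic 2 W Y (fun w => f (k w)) (fun w => g (k w)) := by
  obtain ⟨m, H, hc, h0, h1⟩ := h
  refine ⟨m, fun p => H (k p.1, p.2), ?_, fun x => h0 (k x), fun x => h1 (k x)⟩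
  intro a b hab
  replace hab := (prod2_adj W (digInterval m) a b).mp hab
  exact hc ((prod2_adj X (digInterval m) _ _).mpr ⟨hk hab.1, hab.2⟩)

/-- homotopy in the first slot of a continuous binary operation -/
lemma dh_mu_left {W Y : DigImage} {μ : Y.carrier × Y.carrier → Y.carrier}
    (hμ : DigContinuous (DigImage.prod 2 Y Y) Y μ)
    {f1 f2 : W.carrier → Y.carrier} (h : DigHomotopic 2 W Y f1 f2)
    (k : W.carrier → Y.carrier) (hk : DigContinuous W Y k) :
    DigHomotopic 2 W Y (fun w => μ (f1 w, k w)) (fun w => μ (f2 w, k w)) := by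
  obtain ⟨m, H, hc, h0, h1⟩ := h
  refine ⟨m, fun p => μ (H p, k p.1), ?_, fun x => by simp [h0 x], fun x => by simp [h1 x]⟩
  intro a b hab
  have hab' := (prod2_adj W (digInterval m) a b).mp hab
  exact hμ ((prod2_adj Y Y _ _).mpr ⟨hc hab, hk hab'.1⟩)

/-- homotopy in the second slot of a continuous binary operation -/
lemma dh_mu_right {W Y : DigImage} {μ : Y.carrier × Y.carrier → Y.carrier}
    (hμ : DigContinuous (DigImage.prod 2 Y Y) Y μ)
    {f1 f2 : W.carrier → Y.carrier} (h : DigHomotopic 2 W Y f1 f2)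
    (k : W.carrier → Y.carrier) (hk : DigContinuous W Y k) :
    DigHomotopic 2 W Y (fun w => μ (k w, f1 w)) (fun w => μ (k w, f2 w)) := by
  obtain ⟨m, H, hc, h0, h1⟩ := h
  refine ⟨m, fun p => μ (k p.1, H p), ?_, fun x => by simp [h0 x], fun x => by simp [h1 x]⟩
  intro a b hab
  have hab' := (prod2_adj W (digInterval m) a b).mp hab
  exact hμ ((prod2_adj Y Y _ _).mpr ⟨hk hab'.1, hc hab⟩)

lemma left_transfer {X Y : DigImage} {eX : X.carrier} {eY : Y.carrier}
    {μX : X.carrier × X.carrier → X.carrier} {μY : Y.carrier × Y.carrier → Y.carrier}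
    {f : X.carrier → Y.carrier} {g : Y.carrier → X.carrier}
    (hμY : DigContinuous (DigImage.prod 2 Y Y) Y μY)
    (hf : DigContinuous X Y f) (hg : DigContinuous Y X g) (hfe : f eX = eY)
    (hfg : DigHomotopic 2 Y Y (f ∘ g) id)
    (hmu : DigHomotopic 2 (DigImage.prod 2 X X) Y (fun p => f (μX p)) (fun p => μY (f p.1, f p.2)))
    {α : X.carrier → X.carrier} (hα : LeftHtpyInverse 2 X eX μX α) :
    LeftHtpyInverse 2 Y eY μY (fun y => f (α (g y))) := by
  obtain ⟨hαc, hμαc, hαh⟩ := hα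
  have hτc : DigContinuous Y Y (fun y => f (α (g y))) := fun a b h => hf (hαc (hg h))
  refine ⟨hτc, fun a b h => hμY ((prod2_adj Y Y _ _).mpr ⟨hτc h, h⟩), ?_⟩
  have step1 : DigHomotopic 2 Y Y (fun y => μY (f (α (g y)), (f ∘ g) y))
      (fun y => μY (f (α (g y)), id y)) :=
    dh_mu_right hμY hfg (fun y => f (α (g y))) hτc
  have pairc : DigContinuous Y (DigImage.prod 2 X X) (fun y => (α (g y), g y)) :=
    fun a b h => (prod2_adj X X _ _).mpr ⟨hαc (hg h), hg h⟩
  have step2 : DigHomotopic 2 Y Y (fun y => f (μX (α (g y), g y)))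
      (fun y => μY (f (α (g y)), f (g y))) :=
    dh_comp_right (Y := Y) (fun y => (α (g y), g y)) pairc hmu
  have step3 : DigHomotopic 2 Y Y (fun y => f (μX (α (g y), g y))) (fun _ => f eX) :=
    dh_comp_left f hf (dh_comp_right g hg hαh)
  have chain := dh_trans (dh_symm step1) (dh_trans (dh_symm step2) step3)
  rw [hfe] at chain
  exact chain

lemma right_transfer {X Y : DigImage} {eX : X.carrier} {eY : Y.carrier}
    {μX : X.carrier × X.carrier → X.carrier} {μY : Y.carrier × Y.carrier → Y.carrier}
    {f : X.carrier → Y.carrier} {g : Y.carrier → X.carrier}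
    (hμY : DigContinuous (DigImage.prod 2 Y Y) Y μY)
    (hf : DigContinuous X Y f) (hg : DigContinuous Y X g) (hfe : f eX = eY)
    (hfg : DigHomotopic 2 Y Y (f ∘ g) id)
    (hmu : DigHomotopic 2 (DigImage.prod 2 X X) Y (fun p => f (μX p)) (fun p => μY (f p.1, f p.2)))
    {β : X.carrier → X.carrier} (hβ : RightHtpyInverse 2 X eX μX β) :
    RightHtpyInverse 2 Y eY μY (fun y => f (β (g y))) := by
  obtain ⟨hβc, hμβc, hβh⟩ := hβ
  have hσc : DigContinuous Y Y (fun y => f (β (g y))) := fun a b h => hf (hβc (hg h))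
  refine ⟨hσc, fun a b h => hμY ((prod2_adj Y Y _ _).mpr ⟨h, hσc h⟩), ?_⟩
  have step1 : DigHomotopic 2 Y Y (fun y => μY ((f ∘ g) y, f (β (g y))))
      (fun y => μY (id y, f (β (g y)))) :=
    dh_mu_left hμY hfg (fun y => f (β (g y))) hσc
  have pairc : DigContinuous Y (DigImage.prod 2 X X) (fun y => (g y, β (g y))) :=
    fun a b h => (prod2_adj X X _ _).mpr ⟨hg h, hβc (hg h)⟩
  have step2 : DigHomotopic 2 Y Y (fun y => f (μX (g y, β (g y))))
      (fun y => μY (f (g y), f (β (g y)))) :=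
    dh_comp_right (Y := Y) (fun y => (g y, β (g y))) pairc hmu
  have step3 : DigHomotopic 2 Y Y (fun y => f (μX (g y, β (g y)))) (fun _ => f eX) :=
    dh_comp_left f hf (dh_comp_right g hg hβh)
  have chain := dh_trans (dh_symm step1) (dh_trans (dh_symm step2) step3)
  rw [hfe] at chain
  exact chain

/-- H-equivalence of `NP_2`-digital H-spaces preserves the existence
of left and right homotopy-inverses, and if the left and right homotopy-inverses
of `X` are `NP_2`-homotopic then the ones obtained for `Y` are `NP_2`-homotopic. -/
theorem hequiv_homotopy_inverses
    (X : DigImage) (eX : X.carrier) (μX : X.carrier × X.carrier → X.carrier)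
    (Y : DigImage) (eY : Y.carrier) (μY : Y.carrier × Y.carrier → Y.carrier)
    (hX : IsHSpace 2 X eX μX) (hY : IsHSpace 2 Y eY μY)
    (heq : HSpaceEquiv 2 X eX μX Y eY μY) :
    ((∃ α, LeftHtpyInverse 2 X eX μX α) → ∃ τ, LeftHtpyInverse 2 Y eY μY τ) ∧
    ((∃ β, RightHtpyInverse 2 X eX μX β) → ∃ σ, RightHtpyInverse 2 Y eY μY σ) ∧
    (∀ α β, LeftHtpyInverse 2 X eX μX α → RightHtpyInverse 2 X eX μX β →
      DigHomotopic 2 X X α β →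
      ∃ τ σ, LeftHtpyInverse 2 Y eY μY τ ∧ RightHtpyInverse 2 Y eY μY σ ∧
        DigHomotopic 2 Y Y τ σ) := by
  obtain ⟨f, g, hf, hg, hfe, hge, hfg, hgf, hmu, hmu'⟩ := heq
  refine ⟨fun ⟨α, hα⟩ => ⟨_, left_transfer hY.continuous hf hg hfe hfg hmu hα⟩,
    fun ⟨β, hβ⟩ => ⟨_, right_transfer hY.continuous hf hg hfe hfg hmu hβ⟩,
    fun α β hα hβ hαβ => ⟨_, _, left_transfer hY.continuous hf hg hfe hfg hmu hα,
      right_transfer hY.continuous hf hg hfe hfg hmu hβ, ?_⟩⟩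
  exact dh_comp_left f hf (dh_comp_right g hg hαβ)
end
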